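/- Let A : (a,b) → ℝ^{n×n} be measurable and locally essentially bounded, with transition matrix Φ, and suppose Φ(t,t0) is totally positive (TP) for all a < t0 < t < b. Let z be a nontrivial solution of ż = A(t)z, i.e. z(t) = Φ(t,t0)z0 with z0 ≠ 0. If z(τ) ∉ V for some τ ∈ (a,b), then for all s, t with a < s < τ < t < b one has s^+(z(t)) < s^+(z(s)); that is, s^+(z(·)) strictly decreases across any time at which the solution leaves the set V. -/

import Mathlib

open Matrix MeasureTheory Set Polynomial Filter

noncomputable section

/-- Number of sign changes between adjacent entries of a list of reals. -/
def signChanges : List ℝ → ℕ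
  | [] => 0
  | [_] => 0
  | a :: b :: l => (if a * b < 0 then 1 else 0) + signChanges (b :: l)

/-- `s^-(y)`: the number of sign variations in `y` after deleting all zero entries. -/
def sMinus {n : ℕ} (y : Fin n → ℝ) : ℕ :=
  signChanges ((List.ofFn y).filter (fun x => decide (x ≠ 0)))

/-- `s^+(y)`: the maximal number of sign variations in `y` after each zero entry is
replaced by either `+1` or `-1`. -/
def sPlus {n : ℕ} (y : Fin n → ℝ) : ℕ :=
  Finset.univ.sup fun ε : Fin n → Bool =>
    signChanges (List.ofFn fun i => if y i = 0 then (if ε i then (1:ℝ) else -1) else y i)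

/-- A matrix is totally positive if all its minors are positive. -/
def IsTP {n m : ℕ} (A : Matrix (Fin n) (Fin m) ℝ) : Prop :=
  ∀ (k : ℕ) (r : Fin k → Fin n) (c : Fin k → Fin m),
    StrictMono r → StrictMono c → 0 < (A.submatrix r c).det

/-- A matrix is totally nonnegative if all its minors are nonnegative. -/
def IsTN {n m : ℕ} (A : Matrix (Fin n) (Fin m) ℝ) : Prop :=
  ∀ (k : ℕ) (r : Fin k → Fin n) (c : Fin k → Fin m),
    StrictMono r → StrictMono c → 0 ≤ (A.submatrix r c).det

/-- Tridiagonal with nonnegative sub- and super-diagonal entries. -/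
def InM {n : ℕ} (A : Matrix (Fin n) (Fin n) ℝ) : Prop :=
  (∀ i j : Fin n, ((i : ℕ) + 1 < (j : ℕ) ∨ (j : ℕ) + 1 < (i : ℕ)) → A i j = 0) ∧
  (∀ i j : Fin n, ((i : ℕ) = (j : ℕ) + 1 ∨ (j : ℕ) = (i : ℕ) + 1) → 0 ≤ A i j)

/-- Tridiagonal with positive sub- and super-diagonal entries. -/
def InMPlus {n : ℕ} (A : Matrix (Fin n) (Fin n) ℝ) : Prop :=
  (∀ i j : Fin n, ((i : ℕ) + 1 < (j : ℕ) ∨ (j : ℕ) + 1 < (i : ℕ)) → A i j = 0) ∧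
  (∀ i j : Fin n, ((i : ℕ) = (j : ℕ) + 1 ∨ (j : ℕ) = (i : ℕ) + 1) → 0 < A i j)

/-- `A` is measurable and locally essentially bounded on `(a,b)` (entrywise). -/
def GoodCoeff {n : ℕ} (a b : ℝ) (A : ℝ → Matrix (Fin n) (Fin n) ℝ) : Prop :=
  (∀ i j, Measurable fun t => A t i j) ∧
  ∀ K : Set ℝ, K ⊆ Set.Ioo a b → IsCompact K →
    ∃ C : ℝ, ∀ᵐ t ∂volume, t ∈ K → ∀ i j, |A t i j| ≤ C

/-- `Φ` is the transition matrix of `ż = A(t)z` on `(a,b)`, encoded through the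
equivalent integral equation `Φ(t,t0) = I + ∫_{t0}^t A(s)Φ(s,t0) ds`. -/
def IsTransitionOn {n : ℕ} (a b : ℝ) (A : ℝ → Matrix (Fin n) (Fin n) ℝ)
    (Φ : ℝ → ℝ → Matrix (Fin n) (Fin n) ℝ) : Prop :=
  ∀ t0 ∈ Set.Ioo a b, ∀ t ∈ Set.Ioo a b, ∀ i j,
    Φ t t0 i j = (1 : Matrix (Fin n) (Fin n) ℝ) i j + ∫ s in t0..t, (A s * Φ s t0) i j


lemma sc_cons_cons (a b : ℝ) (l : List ℝ) :
    signChanges (a :: b :: l) = (if a * b < 0 then 1 else 0) + signChanges (b :: l) := by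
  rw [signChanges]

lemma chi_tri {a b c : ℝ} (hb : b ≠ 0) :
    (if a * c < 0 then (1:ℕ) else 0) ≤ (if a * b < 0 then 1 else 0) + (if b * c < 0 then 1 else 0) := by
  split_ifs with h1 h2 h3 <;> try omega
  exfalso
  rename_i hz
  nlinarith [mul_nonneg (not_lt.1 h2) (not_lt.1 hz), mul_self_pos.2 hb]

lemma sc_le_cons (a : ℝ) (l : List ℝ) : signChanges l ≤ signChanges (a :: l) := by
  cases l with
  | nil => simp [signChanges]
  | cons b t => rw [sc_cons_cons]; omega

lemma sc_cons_le_cons_cons (a b : ℝ) (l : List ℝ) (hb : b ≠ 0) :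
    signChanges (a :: l) ≤ signChanges (a :: b :: l) := by
  cases l with
  | nil => simp [signChanges]
  | cons c t =>
    rw [sc_cons_cons, sc_cons_cons, sc_cons_cons]
    have := chi_tri (a := a) (b := b) (c := c) hb
    omega

theorem sc_sublist_aux {l₁ l₂ : List ℝ} (h : l₁.Sublist l₂) (h2 : ∀ x ∈ l₂, x ≠ 0) :
    signChanges l₁ ≤ signChanges l₂ ∧ ∀ a : ℝ, signChanges (a :: l₁) ≤ signChanges (a :: l₂) := by
  induction h with
  | slnil => exact ⟨le_refl _, fun a => le_refl _⟩
  | @cons l₁ l₂ b hsub ih =>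
    have hb : b ≠ 0 := h2 b (by simp)
    have h2' : ∀ x ∈ l₂, x ≠ 0 := fun x hx => h2 x (by simp [hx])
    obtain ⟨ih1, ih2⟩ := ih h2'
    constructor
    · exact le_trans ih1 (sc_le_cons b l₂)
    · intro a
      exact le_trans (ih2 a) (sc_cons_le_cons_cons a b l₂ hb)
  | @cons_cons l₁ l₂ b hsub ih =>
    have h2' : ∀ x ∈ l₂, x ≠ 0 := fun x hx => h2 x (by simp [hx])
    obtain ⟨ih1, ih2⟩ := ih h2'
    refine ⟨ih2 b, fun a => ?_⟩
    rw [sc_cons_cons, sc_cons_cons]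
    have := ih2 b
    omega

theorem sc_sublist {l₁ l₂ : List ℝ} (h : l₁.Sublist l₂) (h2 : ∀ x ∈ l₂, x ≠ 0) :
    signChanges l₁ ≤ signChanges l₂ := (sc_sublist_aux h h2).1


lemma filt_sub : ∀ {n : ℕ} (y d : Fin n → ℝ), (∀ i, y i ≠ 0 → d i = y i) →
    ((List.ofFn y).filter (fun x => decide (x ≠ 0))).Sublist (List.ofFn d) := by
  intro n
  induction n with
  | zero => intro y d h; simp
  | succ m ih =>
    intro y d h
    rw [List.ofFn_succ, List.ofFn_succ, List.filter_cons]
    by_cases h0 : y 0 ≠ 0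
    · simp only [h0, decide_eq_true_eq, if_true]
      rw [if_pos h0, h 0 h0]
      exact List.Sublist.cons₂ _ (ih _ _ (fun i hi => h i.succ hi))
    · simp only [ne_eq, h0, not_true, decide_false, if_false]
      exact List.Sublist.cons _ (ih _ _ (fun i hi => h i.succ hi))

theorem sMinus_le_sPlus {n : ℕ} (y : Fin n → ℝ) : sMinus y ≤ sPlus y := by
  set d : Fin n → ℝ := fun i => if y i = 0 then (if (true : Bool) then (1:ℝ) else -1) else y i with hd
  have h1 : sMinus y ≤ signChanges (List.ofFn d) := by
    apply sc_sublist (filt_sub y d ?_) ?_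
    · intro i hi; simp [hd, hi]
    · intro x hx
      rw [List.mem_ofFn] at hx
      obtain ⟨i, rfl⟩ := hx
      simp only [hd]
      split_ifs <;> norm_num
      assumption
  exact le_trans h1 (Finset.le_sup (f := fun ε : Fin n → Bool =>
    signChanges (List.ofFn fun i => if y i = 0 then (if ε i then (1:ℝ) else -1) else y i))
    (Finset.mem_univ (fun _ => true)))


lemma sign_trans {a b c : ℝ} (ha : a ≠ 0) (hb : b ≠ 0) (hc : c ≠ 0)
    (hab : ¬ (a * b < 0)) (hbc : b * c < 0) : a * c < 0 := by
  rcases (mul_ne_zero ha hc).lt_or_gt with h | h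
  · exact h
  · exfalso
    nlinarith [mul_nonneg (not_lt.1 hab) (le_of_lt (neg_pos.2 hbc)), mul_self_pos.2 hb]

lemma alt_sublist : ∀ (l : List ℝ), (∀ x ∈ l, x ≠ 0) → l ≠ [] →
    ∃ s : List ℝ, s.Sublist l ∧ s.length = signChanges l + 1 ∧
      s.Chain' (fun u v => u * v < 0) ∧ s.head? = l.head? := by
  intro l
  induction l with
  | nil => intro _ h; exact absurd rfl h
  | cons a t ih =>
    intro hnz _
    cases t with
    | nil => exact ⟨[a], by simp, by simp [signChanges], List.isChain_singleton _, rfl⟩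
    | cons b u =>
      have hb : b ≠ 0 := hnz b (by simp)
      have ha : a ≠ 0 := hnz a (by simp)
      obtain ⟨s', hsub, hlen, hchain, hhead⟩ :=
        ih (fun x hx => hnz x (by simp [hx])) (by simp)
      -- s' = b :: v
      obtain ⟨v, rfl⟩ : ∃ v, s' = b :: v := by
        cases s' with
        | nil => simp at hlen
        | cons x v => simp at hhead; exact ⟨v, by rw [hhead]⟩
      by_cases hab : a * b < 0
      · refine ⟨a :: b :: v, List.Sublist.cons₂ _ hsub, ?_, ?_, rfl⟩
        · rw [sc_cons_cons, if_pos hab]; simp at hlen ⊢; omega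
        · simp only [List.Chain', List.isChain_cons_cons]; exact ⟨hab, hchain⟩
      · have hvu : v.Sublist u := (List.cons_sublist_cons).mp hsub
        refine ⟨a :: v, List.Sublist.cons₂ _ (hvu.trans (List.sublist_cons_self b u)), ?_, ?_, rfl⟩
        · rw [sc_cons_cons, if_neg hab]; simp at hlen ⊢; omega
        · cases v with
          | nil => exact List.isChain_singleton _
          | cons c w =>
            simp only [List.Chain', List.isChain_cons_cons] at hchain ⊢
            have hc : c ≠ 0 := by
              have : c ∈ a :: b :: u := (List.Sublist.cons₂ a hsub).subset (by simp)
              exact hnz c this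
            exact ⟨sign_trans ha hb hc hab hchain.1, hchain.2⟩


lemma exists_alt_fin {n m : ℕ} (d : Fin n → ℝ) (hnz : ∀ i, d i ≠ 0)
    (hn : 0 < n) (hm : m ≤ signChanges (List.ofFn d)) :
    ∃ r : Fin (m+1) → Fin n, StrictMono r ∧
      ∀ (i : ℕ) (h : i + 1 < m + 1), d (r ⟨i, by omega⟩) * d (r ⟨i+1, h⟩) < 0 := by
  set l : List ℝ := List.ofFn d with hl
  have hlnil : l ≠ [] := by
    rw [hl, ← List.length_pos_iff_ne_nil, List.length_ofFn]; exact hn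
  obtain ⟨s, hsub, hlen, hchain, _⟩ := alt_sublist l
    (by intro x hx; rw [hl, List.mem_ofFn] at hx; obtain ⟨i, rfl⟩ := hx; exact hnz i) hlnil
  -- truncate to length m+1
  set s' : List ℝ := s.take (m+1) with hs'
  have hsub' : s'.Sublist l := (List.take_sublist _ _).trans hsub
  have hlen' : s'.length = m + 1 := by
    rw [hs', List.length_take, hlen]; omega
  have hchain' : s'.Chain' (fun u v => u * v < 0) := hchain.take _
  obtain ⟨is, his, hpw⟩ := List.sublist_eq_map_getElem hsub'
  have hislen : is.length = m + 1 := by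
    have := congrArg List.length his; simp [hlen'] at this; omega
  have hln : l.length = n := by rw [hl, List.length_ofFn]
  refine ⟨fun i => Fin.cast hln (is.get (Fin.cast hislen.symm i)), ?_, ?_⟩
  · intro i j hij
    have := (List.pairwise_iff_get.mp hpw) (Fin.cast hislen.symm i) (Fin.cast hislen.symm j) (by simpa using hij)
    simpa using this
  · intro i h
    have hc : s'.get ⟨i, by omega⟩ * s'.get ⟨i+1, by omega⟩ < 0 :=
      List.isChain_iff_getElem.mp hchain' i (by omega)
    have e1 : ∀ (q : Fin s'.length), s'.get q = d (Fin.cast hln (is.get (Fin.cast (by rw [hislen, hlen']) q))) := by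
      intro q
      rw [List.get_of_eq his q]
      simp only [List.get_eq_getElem, List.getElem_map]
      show (List.ofFn d)[_] = _
      rw [Fin.getElem_fin, List.getElem_ofFn]
      rfl
    have e2 := e1 ⟨i, by omega⟩
    have e3 := e1 ⟨i+1, by omega⟩
    rw [e2, e3] at hc
    convert hc using 3 <;> simp [Fin.cast]


def blk (F : List ℝ) (q : ℕ) : ℕ := signChanges (F.take (q+1))

lemma blk_zero (F : List ℝ) : blk F 0 = 0 := by
  unfold blk
  cases F with
  | nil => rfl
  | cons a t => simp [signChanges]

lemma blk_cons (a b : ℝ) (t : List ℝ) (q : ℕ) :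
    blk (a :: b :: t) (q + 1) = (if a * b < 0 then 1 else 0) + blk (b :: t) q := by
  unfold blk
  have : (a :: b :: t).take (q + 1 + 1) = a :: (b :: t).take (q + 1) := by simp
  rw [this]
  have h2 : (b :: t).take (q+1) = b :: t.take q := by simp
  rw [h2, sc_cons_cons, ← h2]

lemma blk_succ (F : List ℝ) (q : ℕ) (h : q + 1 < F.length) :
    blk F (q+1) = blk F q +
      (if F.get ⟨q, by omega⟩ * F.get ⟨q+1, h⟩ < 0 then 1 else 0) := by
  induction q generalizing F with
  | zero =>
    match F, h with
    | a :: b :: t, _ =>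
      rw [blk_cons, blk_zero, blk_zero]
      simp
  | succ q ih =>
    match F, h with
    | a :: b :: t, h =>
      have h' : q + 1 < (b :: t).length := by simpa using Nat.lt_of_succ_lt_succ h
      rw [blk_cons, blk_cons, ih (b :: t) h']
      have e1 : (a :: b :: t).get ⟨q+1, by omega⟩ = (b :: t).get ⟨q, by omega⟩ := rfl
      have e2 : (a :: b :: t).get ⟨q+2, h⟩ = (b :: t).get ⟨q+1, h'⟩ := rfl
      rw [e1, e2]
      omega

lemma blk_le_succ (F : List ℝ) (q : ℕ) : blk F q ≤ blk F (q+1) ∧ blk F (q+1) ≤ blk F q + 1 := by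
  by_cases h : q + 1 < F.length
  · rw [blk_succ F q h]; split_ifs <;> omega
  · unfold blk
    rw [List.take_of_length_le (by omega), List.take_of_length_le (by omega)]
    omega

lemma blk_mono (F : List ℝ) : Monotone (blk F) :=
  monotone_nat_of_le_succ (fun q => (blk_le_succ F q).1)

lemma blk_last (F : List ℝ) (h : F ≠ []) : blk F (F.length - 1) = signChanges F := by
  unfold blk
  have : F.length - 1 + 1 = F.length := by
    have := List.length_pos_iff_ne_nil.mpr h; omega
  rw [this, List.take_length]

lemma nat_ivt (f : ℕ → ℕ) (h0 : f 0 = 0) (hstep : ∀ i, f (i+1) ≤ f i + 1) :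
    ∀ m p, p ≤ f m → ∃ i, i ≤ m ∧ f i = p := by
  intro m
  induction m with
  | zero => intro p hp; exact ⟨0, le_refl _, by omega⟩
  | succ m ih =>
    intro p hp
    by_cases h : p ≤ f m
    · obtain ⟨i, hi, hfi⟩ := ih p h
      exact ⟨i, by omega, hfi⟩
    · exact ⟨m+1, le_refl _, by have := hstep m; omega⟩

lemma blk_sign (F : List ℝ) (hnz : ∀ x ∈ F, x ≠ 0) (h0 : 0 < F.length) :
    ∀ q (h : q < F.length),
      0 < (if 0 < F.get ⟨0, h0⟩ then (1:ℝ) else -1) * (-1)^(blk F q) * F.get ⟨q, h⟩ := by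
  intro q
  induction q with
  | zero =>
    intro h
    rw [blk_zero]
    have := hnz (F.get ⟨0, h0⟩) (List.get_mem F _)
    split_ifs with hpos
    · simpa using hpos
    · simp only [pow_zero, mul_one]
      rcases this.lt_or_gt with hl | hl
      · nlinarith
      · exact absurd hl hpos
  | succ q ih =>
    intro h
    have hq : q < F.length := by omega
    have IH := ih hq
    rw [blk_succ F q h]
    have hnq := hnz (F.get ⟨q, hq⟩) (List.get_mem F _)
    have hnq1 := hnz (F.get ⟨q+1, h⟩) (List.get_mem F _)
    set s : ℝ := (if 0 < F.get ⟨0, h0⟩ then (1:ℝ) else -1) with hs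
    have hs2 : s = 1 ∨ s = -1 := by rw [hs]; split_ifs <;> simp
    obtain hu | hu : s * (-1)^(blk F q) = 1 ∨ s * (-1)^(blk F q) = -1 := by
      rcases hs2 with h' | h' <;> rcases neg_one_pow_eq_or ℝ (blk F q) with h2 | h2 <;>
        rw [h', h2] <;> norm_num
    all_goals (
      have key : ∀ w : ℝ, s * (-1)^(blk F q + 1) * w = -(s * (-1)^(blk F q) * w) := by
        intro w; rw [pow_succ]; ring)
    all_goals (
      split_ifs with hlt
      · rw [key]
        rw [hu] at IH ⊢
        nlinarith
      · have hgt : 0 < F.get ⟨q, hq⟩ * F.get ⟨q+1, h⟩ :=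
          lt_of_le_of_ne (not_lt.1 hlt) (Ne.symm (mul_ne_zero hnq hnq1))
        simp only [add_zero]
        rw [hu] at IH ⊢
        nlinarith)


lemma alt_sign {n m : ℕ} (d : Fin n → ℝ) (r : Fin (m+1) → Fin n)
    (hnz : ∀ i, d (r i) ≠ 0)
    (halt : ∀ (i : ℕ) (h : i + 1 < m + 1), d (r ⟨i, by omega⟩) * d (r ⟨i+1, h⟩) < 0) :
    ∀ (i : ℕ) (h : i < m+1),
      0 < (if 0 < d (r 0) then (1:ℝ) else -1) * (-1)^i * d (r ⟨i, h⟩) := by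
  set s : ℝ := (if 0 < d (r 0) then (1:ℝ) else -1) with hs
  have hs2 : s = 1 ∨ s = -1 := by rw [hs]; split_ifs <;> simp
  intro i
  induction i with
  | zero =>
    intro h
    have h0 : (⟨0, h⟩ : Fin (m+1)) = 0 := rfl
    rw [h0, pow_zero, mul_one, hs]
    have := hnz 0
    split_ifs with hpos
    · simpa using hpos
    · rcases this.lt_or_gt with hl | hl
      · nlinarith
      · exact absurd hl hpos
  | succ i ih =>
    intro h
    have hi : i < m + 1 := by omega
    have IH := ih hi
    have hprod := halt i h
    obtain hu | hu : s * (-1)^i = 1 ∨ s * (-1)^i = -1 := by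
      rcases hs2 with h' | h' <;> rcases neg_one_pow_eq_or ℝ i with h2 | h2 <;>
        rw [h', h2] <;> norm_num
    all_goals (
      have key : s * (-1)^(i + 1) * d (r ⟨i+1, h⟩) = -(s * (-1)^i * d (r ⟨i+1, h⟩)) := by
        rw [pow_succ]; ring)
    all_goals (rw [key]; rw [hu] at IH ⊢; nlinarith)

theorem vdp {n : ℕ} (A : Matrix (Fin n) (Fin n) ℝ) (hA : IsTP A)
    (x : Fin n → ℝ) (hx : x ≠ 0) : sPlus (A.mulVec x) ≤ sMinus x := by
  classical
  -- the support enumeration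
  set L : List (Fin n) := (List.finRange n).filter (fun i => decide (x i ≠ 0)) with hL
  set F : List ℝ := L.map x with hFdef
  have hmemL : ∀ i : Fin n, i ∈ L ↔ x i ≠ 0 := by
    intro i; rw [hL, List.mem_filter]; simp
  have hF : sMinus x = signChanges F := by
    unfold sMinus
    congr 1
    rw [hFdef, hL, List.ofFn_eq_map, List.filter_map]
    rfl
  set N : ℕ := L.length with hN
  have hFlen : F.length = N := by rw [hFdef]; exact List.length_map _
  have hNpos : 0 < N := by
    obtain ⟨i, hi⟩ := Function.ne_iff.mp hx
    have : i ∈ L := (hmemL i).mpr hi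
    rw [hN]
    exact List.length_pos_iff_ne_nil.mpr (List.ne_nil_of_mem this)
  have hnpos : 0 < n := (L.get ⟨0, hNpos⟩).pos
  set js : Fin N → Fin n := fun q => L.get (Fin.cast hN.symm q) with hjs
  have hjs_mono : StrictMono js := by
    intro q q' hqq'
    have hpw : L.Pairwise (· < ·) := List.Pairwise.sublist List.filter_sublist
      (List.pairwise_lt_finRange n)
    exact List.pairwise_iff_get.mp hpw _ _ (by simpa using hqq')
  have hjs_ne : ∀ q, x (js q) ≠ 0 := by
    intro q
    exact (hmemL _).mp (L.get_mem _)
  have hjs_surj : ∀ i : Fin n, x i ≠ 0 → ∃ q, js q = i := by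
    intro i hi
    obtain ⟨q, hq⟩ := List.mem_iff_get.mp ((hmemL i).mpr hi)
    exact ⟨Fin.cast hN q, hq⟩
  have hFget : ∀ q : Fin N, F.get (Fin.cast hFlen.symm q) = x (js q) := by
    intro q
    show (L.map x).get (Fin.cast hFlen.symm q) = x (js q)
    simp only [List.get_eq_getElem, List.getElem_map]
    rfl
  have hFnz : ∀ v ∈ F, v ≠ 0 := by
    intro v hv
    rw [hFdef, List.mem_map] at hv
    obtain ⟨i, hi, rfl⟩ := hv
    exact (hmemL i).mp hi
  have hFlenpos : 0 < F.length := by omega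
  set k : ℕ := signChanges F with hk
  clear_value k
  have hblk_le : ∀ q, q < N → blk F q ≤ k := by
    intro q hq
    calc blk F q ≤ blk F (F.length - 1) := blk_mono F (by omega)
      _ = k := by rw [hk]; exact blk_last F (by rw [← List.length_pos_iff_ne_nil]; omega)
  -- block map
  set g : Fin N → Fin (k+1) := fun q => ⟨blk F q, by have := hblk_le q q.2; omega⟩ with hg
  set s₀ : ℝ := (if 0 < F.get ⟨0, hFlenpos⟩ then (1:ℝ) else -1) with hs₀
  have hs₀2 : s₀ = 1 ∨ s₀ = -1 := by rw [hs₀]; split_ifs <;> simp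
  have hs₀sq : ∀ p : ℕ, (s₀ * (-1)^p) * (s₀ * (-1)^p) = 1 := by
    intro p
    rcases hs₀2 with h | h <;> rcases neg_one_pow_eq_or ℝ p with h2 | h2 <;>
      rw [h, h2] <;> norm_num
  -- weights
  set wt : Fin N → ℝ := fun q => s₀ * (-1)^(blk F q) * x (js q) with hwt
  have hwt_pos : ∀ q, 0 < wt q := by
    intro q
    have h1 := blk_sign F hFnz hFlenpos q (by omega)
    have e : F.get ⟨(q:ℕ), by omega⟩ = x (js q) := hFget q
    show 0 < s₀ * (-1)^(blk F q) * x (js q)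
    rw [← e]
    exact h1
  -- the condensed matrix
  set B : Matrix (Fin n) (Fin (k+1)) ℝ := fun i p =>
    ∑ q ∈ Finset.univ.filter (fun q => g q = p), (s₀ * (-1)^(p:ℕ) * x (js q)) * A i (js q)
    with hB
  set cvec : Fin (k+1) → ℝ := fun p => s₀ * (-1)^(p:ℕ) with hcvec
  -- y = B *ᵥ cvec
  have hy : A.mulVec x = B.mulVec cvec := by
    funext i
    show dotProduct (fun j => A i j) x = dotProduct (fun j => B i j) cvec
    rw [dotProduct, dotProduct]
    have e1 : ∀ p : Fin (k+1), B i p * cvec p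
        = ∑ q ∈ Finset.univ.filter (fun q => g q = p), x (js q) * A i (js q) := by
      intro p
      show (∑ q ∈ Finset.univ.filter (fun q => g q = p),
        (s₀ * (-1)^(p:ℕ) * x (js q)) * A i (js q)) * (s₀ * (-1)^(p:ℕ)) = _
      rw [Finset.sum_mul]
      apply Finset.sum_congr rfl
      intro q _
      linear_combination (x (js q) * A i (js q)) * hs₀sq (p : ℕ)
    rw [Finset.sum_congr rfl (fun p _ => e1 p)]
    rw [Finset.sum_fiberwise Finset.univ g (fun q => x (js q) * A i (js q))]
    -- now reindex over support
    have e2 : ∑ j : Fin n, A i j * x j = ∑ j ∈ Finset.univ.filter (fun j => x j ≠ 0), A i j * x j := by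
      rw [Finset.sum_filter_of_ne]
      intro j _ hj
      intro hxj
      exact hj (by rw [hxj, mul_zero])
    rw [e2]
    refine (Finset.sum_bij (fun q _ => js q) ?_ ?_ ?_ ?_).symm
    · intro q _; simp [hjs_ne q]
    · intro q _ q' _ h; exact hjs_mono.injective h
    · intro j hj
      simp only [Finset.mem_filter, Finset.mem_univ, true_and] at hj
      obtain ⟨q, hq⟩ := hjs_surj j hj
      exact ⟨q, Finset.mem_univ q, hq⟩
    · intro q _
      ring
  -- minors of B are positive
  have hSne : ∀ p : Fin (k+1), (Finset.univ.filter (fun q => g q = p)).Nonempty := by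
    intro p
    have hstep : ∀ i, blk F (i+1) ≤ blk F i + 1 := fun i => (blk_le_succ F i).2
    have hlast : (p : ℕ) ≤ blk F (N - 1) := by
      rw [show N - 1 = F.length - 1 by omega, blk_last F (by rw [← List.length_pos_iff_ne_nil]; omega), ← hk]
      exact Nat.lt_succ_iff.mp p.2
    obtain ⟨q, hq1, hq2⟩ := nat_ivt (blk F) (blk_zero F) hstep (N-1) p hlast
    refine ⟨⟨q, by omega⟩, ?_⟩
    simp only [Finset.mem_filter, Finset.mem_univ, true_and]
    exact Fin.ext hq2
  have hJmono : ∀ (J : Fin (k+1) → Fin N), (∀ p, g (J p) = p) → StrictMono (fun p => js (J p)) := by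
    intro J hJ p p' hpp'
    apply hjs_mono
    by_contra hcon
    have h1 : J p' ≤ J p := not_lt.1 hcon
    have h2 : blk F (J p') ≤ blk F (J p) := blk_mono F h1
    have e1 : blk F (J p) = (p : ℕ) := congrArg Fin.val (hJ p)
    have e2 : blk F (J p') = (p' : ℕ) := congrArg Fin.val (hJ p')
    rw [e1, e2] at h2
    exact absurd hpp' (not_lt.2 h2)
  have hminor : ∀ (r : Fin (k+1) → Fin n), StrictMono r → 0 < (B.submatrix r id).det := by
    intro r hr
    rw [← Matrix.det_transpose]
    have hM : (B.submatrix r id)ᵀ = fun p => ∑ q ∈ Finset.univ.filter (fun q => g q = p),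
        wt q • (fun i => A (r i) (js q)) := by
      funext p i
      show B (r i) p = _
      rw [Finset.sum_apply]
      show (∑ q ∈ Finset.univ.filter (fun q => g q = p),
        (s₀ * (-1)^(p:ℕ) * x (js q)) * A (r i) (js q)) = _
      apply Finset.sum_congr rfl
      intro q hq
      have hgq : blk F (q:ℕ) = (p:ℕ) :=
        congrArg Fin.val (Finset.mem_filter.mp hq).2
      show (s₀ * (-1)^(p:ℕ) * x (js q)) * A (r i) (js q) = (s₀ * (-1)^(blk F (q:ℕ)) * x (js q)) * A (r i) (js q)
      rw [hgq]
    have hdet : (B.submatrix r id)ᵀ.det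
        = ∑ J ∈ Fintype.piFinset (fun p : Fin (k+1) => Finset.univ.filter (fun q => g q = p)),
          (∏ p, wt (J p)) * ((A.submatrix r (fun p => js (J p))).det) := by
      calc (B.submatrix r id)ᵀ.det
          = Matrix.detRowAlternating ((B.submatrix r id)ᵀ) := rfl
        _ = (Matrix.detRowAlternating (R := ℝ) (n := Fin (k+1))).toMultilinearMap
              (fun p => ∑ q ∈ Finset.univ.filter (fun q => g q = p),
                wt q • (fun i => A (r i) (js q))) := by rw [hM]; rfl
        _ = ∑ J ∈ Fintype.piFinset (fun p : Fin (k+1) => Finset.univ.filter (fun q => g q = p)),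
              (Matrix.detRowAlternating (R := ℝ) (n := Fin (k+1))).toMultilinearMap
                (fun p => wt (J p) • (fun i => A (r i) (js (J p)))) :=
            MultilinearMap.map_sum_finset _ _ _
        _ = _ := by
            apply Finset.sum_congr rfl
            intro J _
            rw [MultilinearMap.map_smul_univ]
            rw [smul_eq_mul]
            congr 1
            have : (fun p => (fun i => A (r i) (js (J p)))) = (A.submatrix r (fun p => js (J p)))ᵀ := rfl
            show Matrix.detRowAlternating ((A.submatrix r (fun p => js (J p)))ᵀ) = _
            show ((A.submatrix r (fun p => js (J p)))ᵀ).det = _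
            rw [Matrix.det_transpose]
    rw [hdet]
    apply Finset.sum_pos
    · intro J hJ
      rw [Fintype.mem_piFinset] at hJ
      have hJ' : ∀ p, g (J p) = p := by
        intro p
        have := hJ p
        simpa only [Finset.mem_filter, Finset.mem_univ, true_and] using this
      apply mul_pos
      · exact Finset.prod_pos (fun p _ => hwt_pos (J p))
      · exact hA (k+1) r (fun p => js (J p)) hr (hJmono J hJ')
    · exact Fintype.piFinset_nonempty.mpr hSne
  -- final contradiction argument
  by_contra hcon
  push_neg at hcon
  rw [hF] at hcon
  set y : Fin n → ℝ := A.mulVec x with hydef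
  obtain ⟨ε, -, hsup⟩ := Finset.exists_mem_eq_sup (Finset.univ : Finset (Fin n → Bool))
    ⟨(fun _ => true), Finset.mem_univ _⟩
    (fun ε => signChanges (List.ofFn fun i => if y i = 0 then (if ε i then (1:ℝ) else -1) else y i))
  set d : Fin n → ℝ := fun i => if y i = 0 then (if ε i then (1:ℝ) else -1) else y i with hd
  have hdnz : ∀ i, d i ≠ 0 := by
    intro i
    show (if y i = 0 then (if ε i then (1:ℝ) else -1) else y i) ≠ 0
    split_ifs with h1 h2
    · norm_num
    · norm_num
    · exact h1
  have hdy : ∀ i, y i = 0 ∨ y i = d i := by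
    intro i
    by_cases h : y i = 0
    · exact Or.inl h
    · right
      show y i = (if y i = 0 then (if ε i then (1:ℝ) else -1) else y i)
      rw [if_neg h]
  have hsc : k + 1 ≤ signChanges (List.ofFn d) := by
    have h2 : sPlus y = signChanges (List.ofFn d) := hsup
    rw [← h2]
    exact hcon
  obtain ⟨r, hrmono, hralt⟩ := exists_alt_fin d hdnz hnpos hsc
  set σ : ℝ := if 0 < d (r 0) then (1:ℝ) else -1 with hσ
  have hσ2 : σ = 1 ∨ σ = -1 := by rw [hσ]; split_ifs <;> simp
  have hσne : σ ≠ 0 := by rcases hσ2 with h | h <;> rw [h] <;> norm_num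
  have hdr := alt_sign d r (fun i => hdnz (r i)) hralt
  have hyr : ∀ (i : ℕ) (h : i < k+1+1), 0 ≤ σ * (-1)^i * y (r ⟨i, h⟩) := by
    intro i h
    rcases hdy (r ⟨i,h⟩) with h0 | h0
    · rw [h0]; simp
    · rw [h0]; exact le_of_lt (hdr i h)
  -- the (k+2)×(k+2) matrix
  set M : Matrix (Fin (k+2)) (Fin (k+2)) ℝ :=
    fun i => Fin.cons (y (r i)) (fun p => B (r i) p) with hM
  have hyB : ∀ i : Fin n, y i = ∑ p, cvec p * B i p := by
    intro i
    calc y i = (B.mulVec cvec) i := congrFun hy i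
      _ = ∑ p, B i p * cvec p := rfl
      _ = ∑ p, cvec p * B i p := Finset.sum_congr rfl (fun p _ => mul_comm _ _)
  have hMdet : M.det = 0 := by
    have hrow : Mᵀ 0 = ∑ j : Fin (k+2), (Fin.cons 0 cvec : Fin (k+2) → ℝ) j • Mᵀ j := by
      funext i
      rw [Finset.sum_apply, Fin.sum_univ_succ]
      simp only [Fin.cons_zero, Fin.cons_succ, Pi.smul_apply, smul_eq_mul, zero_smul,
        Pi.zero_apply, zero_mul, zero_add]
      show y (r i) = ∑ p : Fin (k+1), cvec p * M i p.succ
      rw [hyB (r i)]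
      rfl
    have h0 : Mᵀ.det = (Fin.cons 0 cvec : Fin (k+2) → ℝ) 0 • Mᵀ.det := by
      conv_lhs => rw [show Mᵀ = Mᵀ.updateRow 0 (∑ j, (Fin.cons 0 cvec : Fin (k+2) → ℝ) j • Mᵀ j) by
        rw [← hrow, Matrix.updateRow_eq_self]]
      exact Matrix.det_updateRow_sum _ 0 _
    rw [Fin.cons_zero, zero_smul] at h0
    rw [← Matrix.det_transpose]
    exact h0
  have hexp := Matrix.det_succ_column_zero M
  have hDpos : ∀ i : Fin (k+2), 0 < (M.submatrix i.succAbove Fin.succ).det := by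
    intro i
    have e : M.submatrix i.succAbove Fin.succ = B.submatrix (r ∘ i.succAbove) id := rfl
    rw [e]
    exact hminor _ (hrmono.comp (Fin.strictMono_succAbove i))
  have hsum : ∑ i : Fin (k+2),
      σ * ((-1:ℝ)^(i:ℕ) * M i 0 * (M.submatrix i.succAbove Fin.succ).det) = 0 := by
    rw [← Finset.mul_sum, ← hexp, hMdet, mul_zero]
  have hterms : ∀ i ∈ (Finset.univ : Finset (Fin (k+2))),
      0 ≤ σ * ((-1:ℝ)^(i:ℕ) * M i 0 * (M.submatrix i.succAbove Fin.succ).det) := by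
    intro i _
    show 0 ≤ σ * ((-1:ℝ)^(i:ℕ) * y (r i) * (M.submatrix i.succAbove Fin.succ).det)
    have h1 : 0 ≤ σ * (-1:ℝ)^(i:ℕ) * y (r i) := hyr (i:ℕ) i.2
    have h2 := hDpos i
    have e1 : σ * ((-1:ℝ)^(i:ℕ) * y (r i) * (M.submatrix i.succAbove Fin.succ).det)
        = (σ * (-1:ℝ)^(i:ℕ) * y (r i)) * (M.submatrix i.succAbove Fin.succ).det := by
      ring
    rw [e1]
    exact mul_nonneg h1 (le_of_lt h2)
  have hy0 : ∀ i : Fin (k+2), y (r i) = 0 := by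
    intro i
    have this' := (Finset.sum_eq_zero_iff_of_nonneg hterms).mp hsum i (Finset.mem_univ i)
    have this : σ * ((-1:ℝ)^(i:ℕ) * y (r i) * (M.submatrix i.succAbove Fin.succ).det) = 0 := this'
    by_contra hne
    have hpow : ((-1:ℝ)^(i:ℕ)) ≠ 0 := by
      rcases neg_one_pow_eq_or ℝ (i:ℕ) with h | h <;> rw [h] <;> norm_num
    exact (mul_ne_zero hσne (mul_ne_zero (mul_ne_zero hpow hne) (ne_of_gt (hDpos i)))) this
  -- kernel argument
  have hker : (B.submatrix (r ∘ Fin.castSucc) id).mulVec cvec = 0 := by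
    funext i
    show ∑ p, B (r (Fin.castSucc i)) p * cvec p = 0
    have := hyB (r (Fin.castSucc i))
    have e : ∑ p, B (r (Fin.castSucc i)) p * cvec p = ∑ p, cvec p * B (r (Fin.castSucc i)) p :=
      Finset.sum_congr rfl (fun p _ => mul_comm _ _)
    rw [e, ← this]
    exact hy0 _
  have hdetpos := hminor (r ∘ Fin.castSucc) (hrmono.comp Fin.strictMono_castSucc)
  have hzero := Matrix.eq_zero_of_mulVec_eq_zero (ne_of_gt hdetpos) hker
  have hc0 : cvec 0 = 0 := congrFun hzero 0
  have : s₀ * (-1:ℝ)^((0 : Fin (k+1)):ℕ) = 0 := hc0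
  rcases hs₀2 with h | h <;> rw [h] at this <;> norm_num at this


/-- If the transition matrix `Φ(t,t0)` of `ż = A(t)z` is TP for all
`a < t0 < t < b` and a nontrivial solution `z` satisfies `z(τ) ∉ V` (i.e.
`s^-(z(τ)) ≠ s^+(z(τ))`) for some `τ ∈ (a,b)`, then `s^+(z(·))` strictly decreases
across `τ`: `s^+(z(t)) < s^+(z(s))` whenever `a < s < τ < t < b`. -/
theorem stmt5 {n : ℕ}
    (a b : ℝ) (A : ℝ → Matrix (Fin n) (Fin n) ℝ)
    (Φ : ℝ → ℝ → Matrix (Fin n) (Fin n) ℝ)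
    (hreg : GoodCoeff a b A) (htrans : IsTransitionOn a b A Φ)
    (hTP : ∀ t0 t : ℝ, a < t0 → t0 < t → t < b → IsTP (Φ t t0))
    (z : ℝ → Fin n → ℝ)
    (hz : ∀ t0 ∈ Set.Ioo a b, ∀ t ∈ Set.Ioo a b, t0 ≤ t → z t = (Φ t t0).mulVec (z t0))
    (hz0 : ∃ t1 ∈ Set.Ioo a b, z t1 ≠ 0)
    (τ : ℝ) (hτ : τ ∈ Set.Ioo a b) (hV : sMinus (z τ) ≠ sPlus (z τ)) :
    ∀ s t : ℝ, a < s → s < τ → τ < t → t < b → sPlus (z t) < sPlus (z s) := by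
  intro s t has hsτ hτt htb
  obtain ⟨haτ, hτb⟩ := hτ
  have hsIoo : s ∈ Set.Ioo a b := ⟨has, by linarith⟩
  have htIoo : t ∈ Set.Ioo a b := ⟨by linarith, htb⟩
  have hdet : ∀ t0 tt : ℝ, a < t0 → t0 < tt → tt < b → (Φ tt t0).det ≠ 0 := by
    intro t0 tt h1 h2 h3
    have h4 := hTP t0 tt h1 h2 h3 n id id strictMono_id strictMono_id
    rw [Matrix.submatrix_id_id] at h4
    exact ne_of_gt h4
  have hinj : ∀ t0 tt : ℝ, a < t0 → t0 < tt → tt < b →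
      ∀ v : Fin n → ℝ, (Φ tt t0).mulVec v = 0 → v = 0 := by
    intro t0 tt h1 h2 h3 v hv
    exact Matrix.eq_zero_of_mulVec_eq_zero (hdet t0 tt h1 h2 h3) hv
  obtain ⟨t1, ht1, hz1⟩ := hz0
  have hzs : z s ≠ 0 := by
    intro h0
    rcases le_or_gt s t1 with hle | hlt
    · have h5 := hz s hsIoo t1 ht1 hle
      rw [h0, Matrix.mulVec_zero] at h5
      exact hz1 h5
    · have h5 := hz t1 ht1 s hsIoo (le_of_lt hlt)
      exact hz1 (hinj t1 s ht1.1 hlt (by linarith) (z t1) (by rw [← h5, h0]))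
  have hτs := hz s hsIoo τ ⟨haτ, hτb⟩ (le_of_lt hsτ)
  have hzτ : z τ ≠ 0 := fun h0 =>
    hzs (hinj s τ has hsτ hτb (z s) (by rw [← hτs, h0]))
  have hts := hz τ ⟨haτ, hτb⟩ t htIoo (le_of_lt hτt)
  have vdp1 : sPlus (z t) ≤ sMinus (z τ) := by
    rw [hts]; exact vdp _ (hTP τ t haτ hτt htb) _ hzτ
  have vdp2 : sPlus (z τ) ≤ sMinus (z s) := by
    rw [hτs]; exact vdp _ (hTP s τ has hsτ hτb) _ hzs
  have h3 : sMinus (z τ) < sPlus (z τ) := lt_of_le_of_ne (sMinus_le_sPlus _) hV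
  have h4 : sMinus (z s) ≤ sPlus (z s) := sMinus_le_sPlus _
  omega

end
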